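/- Let A be a real symmetric n×n matrix (viewed as a complex matrix) and let G = {exp(itA) : t ∈ ℝ}, a set of unitary matrices. For every ε > 0 there exists T > 0 such that for every matrix M in the topological closure of G and every real s, there is a t with 0 ≤ t ≤ T and ‖M − exp(i(s+t)A)‖ < ε. -/

import Mathlib

open Matrix

noncomputable section

/-- The continuous quantum walk `U(t) = exp(itA)`. -/
def qWalk {n : Type*} [Fintype n] [DecidableEq n] (A : Matrix n n ℂ) (t : ℝ) :
    Matrix n n ℂ :=
  NormedSpace.exp ((Complex.I * (t : ℂ)) • A)

namespace ClosRecAux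

variable {n : ℕ}

lemma qWalk_hom (B : Matrix (Fin n) (Fin n) ℂ) (s t : ℝ) :
    qWalk B (s + t) = qWalk B s * qWalk B t := by
  unfold qWalk
  rw [← Matrix.exp_add_of_commute]
  · congr 1
    push_cast
    rw [mul_add, add_smul]
  · show _ * _ = _ * _
    rw [smul_mul_smul_comm, smul_mul_smul_comm, mul_comm (Complex.I * (t : ℂ))]

lemma qWalk_zero (B : Matrix (Fin n) (Fin n) ℂ) : qWalk B 0 = 1 := by
  unfold qWalk
  simp [NormedSpace.exp_zero]

lemma qWalk_star (B : Matrix (Fin n) (Fin n) ℂ) (hB : Bᴴ = B) (t : ℝ) :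
    (qWalk B t)ᴴ = qWalk B (-t) := by
  unfold qWalk
  rw [← Matrix.exp_conjTranspose, Matrix.conjTranspose_smul, hB]
  congr 1
  simp [Complex.ext_iff]

end ClosRecAux

attribute [local instance] Matrix.normedAddCommGroup Matrix.normedSpace

namespace ClosRecAux

variable {n : ℕ}

lemma mul_norm_bound (X Y : Matrix (Fin n) (Fin n) ℂ) :
    ‖X * Y‖ ≤ n * (‖X‖ * ‖Y‖) := by
  refine (Matrix.norm_le_iff (by positivity)).2 fun i j => ?_
  rw [Matrix.mul_apply]
  calc ‖∑ k, X i k * Y k j‖ ≤ ∑ k, ‖X i k * Y k j‖ := norm_sum_le _ _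
    _ ≤ ∑ _k : Fin n, ‖X‖ * ‖Y‖ := by
        refine Finset.sum_le_sum fun k _ => ?_
        rw [norm_mul]
        exact mul_le_mul (Matrix.norm_entry_le_entrywise_sup_norm X)
          (Matrix.norm_entry_le_entrywise_sup_norm Y) (norm_nonneg _) (norm_nonneg _)
    _ = n * (‖X‖ * ‖Y‖) := by simp [Finset.sum_const, Finset.card_univ]

lemma tendsto_mul_mat {α : Type*} {l : Filter α} {a b : α → Matrix (Fin n) (Fin n) ℂ}
    {L L' : Matrix (Fin n) (Fin n) ℂ} (ha : Filter.Tendsto a l (nhds L))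
    (hb : Filter.Tendsto b l (nhds L')) :
    Filter.Tendsto (fun x => a x * b x) l (nhds (L * L')) := by
  replace ha := tendsto_iff_norm_sub_tendsto_zero.1 ha
  replace hb := tendsto_iff_norm_sub_tendsto_zero.1 hb
  refine tendsto_iff_norm_sub_tendsto_zero.2 ?_
  have hbound : ∀ x, ‖a x * b x - L * L'‖ ≤
      (n : ℝ) * (‖a x - L‖ * (‖b x - L'‖ + ‖L'‖)) + (n : ℝ) * (‖L‖ * ‖b x - L'‖) := by
    intro x
    have e : a x * b x - L * L' = (a x - L) * b x + L * (b x - L') := by noncomm_ring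
    rw [e]
    refine (norm_add_le _ _).trans (add_le_add ?_ (mul_norm_bound _ _))
    refine (mul_norm_bound _ _).trans ?_
    have hby : ‖b x‖ ≤ ‖b x - L'‖ + ‖L'‖ := by
      simpa using norm_add_le (b x - L') L'
    gcongr
  have hlim : Filter.Tendsto
      (fun x => (n : ℝ) * (‖a x - L‖ * (‖b x - L'‖ + ‖L'‖)) + (n : ℝ) * (‖L‖ * ‖b x - L'‖))
      l (nhds ((n : ℝ) * (0 * (0 + ‖L'‖)) + (n : ℝ) * (‖L‖ * 0))) :=
    (tendsto_const_nhds.mul (ha.mul (hb.add tendsto_const_nhds))).add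
      (tendsto_const_nhds.mul (tendsto_const_nhds.mul hb))
  refine squeeze_zero (fun x => norm_nonneg _) hbound ?_
  simpa using hlim

lemma tendsto_conjT_mat {α : Type*} {l : Filter α} {a : α → Matrix (Fin n) (Fin n) ℂ}
    {L : Matrix (Fin n) (Fin n) ℂ} (ha : Filter.Tendsto a l (nhds L)) :
    Filter.Tendsto (fun x => (a x)ᴴ) l (nhds Lᴴ) := by
  replace ha := tendsto_iff_norm_sub_tendsto_zero.1 ha
  refine tendsto_iff_norm_sub_tendsto_zero.2 ?_
  simpa [← Matrix.conjTranspose_sub, Matrix.norm_conjTranspose] using ha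

lemma qWalk_norm_le_one (B : Matrix (Fin n) (Fin n) ℂ) (hB : Bᴴ = B) (t : ℝ) :
    ‖qWalk B t‖ ≤ 1 := by
  have hu : (qWalk B t)ᴴ * qWalk B t = 1 := by
    rw [qWalk_star B hB, ← qWalk_hom]
    simp [qWalk_zero]
  set U := qWalk B t with hU
  refine (Matrix.norm_le_iff zero_le_one).2 fun i j => ?_
  have h2 : ∑ k, (Complex.normSq (U k j) : ℂ) = 1 := by
    have := congrFun (congrFun hu j) j
    rw [Matrix.mul_apply] at this
    simpa [Matrix.conjTranspose_apply, Matrix.one_apply, Complex.star_def,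
      Complex.normSq_eq_conj_mul_self] using this
  have h3 : ∑ k, Complex.normSq (U k j) = 1 := by exact_mod_cast h2
  have h4 : Complex.normSq (U i j) ≤ 1 := by
    calc Complex.normSq (U i j) ≤ ∑ k, Complex.normSq (U k j) :=
          Finset.single_le_sum (f := fun k => Complex.normSq (U k j))
            (fun k _ => Complex.normSq_nonneg _) (Finset.mem_univ i)
      _ = 1 := h3
  have h5 : ‖U i j‖ ^ 2 = Complex.normSq (U i j) := by
    rw [Complex.sq_norm]
  nlinarith [norm_nonneg (U i j)]

end ClosRecAux

set_option maxHeartbeats 1000000 in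
open ClosRecAux in
/-- for `G = {exp(itA) : t ∈ ℝ}` with `A` real symmetric, for every `ε > 0`
there is `T > 0` such that every element of the closure of `G` is within `ε` of some
`exp(i(s+t)A)` with `0 ≤ t ≤ T`, for any `s`. -/
theorem closure_recurrence (n : ℕ) (A : Matrix (Fin n) (Fin n) ℝ) (hA : A.IsSymm)
    (ε : ℝ) (hε : 0 < ε) :
    ∃ T : ℝ, 0 < T ∧
      ∀ M ∈ closure (Set.range (fun t : ℝ => qWalk (A.map Complex.ofReal) t)),
        ∀ s : ℝ, ∃ t : ℝ, 0 ≤ t ∧ t ≤ T ∧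
          ‖M - qWalk (A.map Complex.ofReal) (s + t)‖ < ε := by
  have hB : (A.map Complex.ofReal)ᴴ = A.map Complex.ofReal := by
    ext i j
    simp only [Matrix.conjTranspose_apply, Matrix.map_apply, Complex.star_def,
      Complex.conj_ofReal]
    exact_mod_cast congrArg Complex.ofReal (hA.apply i j)
  set B := A.map Complex.ofReal with hBdef
  set f : ℝ → Matrix (Fin n) (Fin n) ℂ := fun t => qWalk B t with hfdef
  set K := closure (Set.range f) with hKdef
  have hfmul : ∀ s t : ℝ, f (s + t) = f s * f t := qWalk_hom B
  have hf0 : f 0 = 1 := qWalk_zero B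
  have hstar : ∀ t : ℝ, (f t)ᴴ = f (-t) := qWalk_star B hB
  have hnorm : ∀ t : ℝ, ‖f t‖ ≤ 1 := qWalk_norm_le_one B hB
  haveI : ProperSpace (Matrix (Fin n) (Fin n) ℂ) := FiniteDimensional.proper ℂ _
  haveI : FirstCountableTopology (Matrix (Fin n) (Fin n) ℂ) :=
    inferInstanceAs (FirstCountableTopology (Fin n → Fin n → ℂ))
  -- K is compact
  have hKsub : K ⊆ Metric.closedBall 0 1 := by
    refine closure_minimal ?_ Metric.isClosed_closedBall
    rintro _ ⟨t, rfl⟩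
    simpa [Metric.mem_closedBall, dist_eq_norm] using hnorm t
  have hK : IsCompact K :=
    (isCompact_closedBall (0 : Matrix (Fin n) (Fin n) ℂ) 1).of_isClosed_subset
      isClosed_closure hKsub
  -- K is closed under multiplication
  have hKmul : ∀ M ∈ K, ∀ N ∈ K, M * N ∈ K := by
    intro M hM N hN
    rcases mem_closure_iff_seq_limit.1 hM with ⟨u, hu, hul⟩
    rcases mem_closure_iff_seq_limit.1 hN with ⟨v, hv, hvl⟩
    refine mem_closure_of_tendsto (tendsto_mul_mat hul hvl)
      (Filter.Eventually.of_forall fun k => ?_)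
    rcases hu k with ⟨su, hsu⟩
    rcases hv k with ⟨sv, hsv⟩
    exact ⟨su + sv, by rw [hfmul, hsu, hsv]⟩
  -- every f t₀ is approximated by f t with t ≥ 0
  have hpos : ∀ t₀ : ℝ, f t₀ ∈ closure (f '' Set.Ici 0) := by
    intro t₀
    rcases le_or_gt 0 t₀ with h | h
    · exact subset_closure ⟨t₀, h, rfl⟩
    · obtain ⟨L, _, φ, hφ, hLt⟩ := hK.tendsto_subseq
        (x := fun k : ℕ => f ((k : ℝ) * t₀)) (fun k => subset_closure ⟨(k : ℝ) * t₀, rfl⟩)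
      have hLt' : Filter.Tendsto (fun j => f ((φ (j + 1) : ℝ) * t₀)) Filter.atTop (nhds L) :=
        hLt.comp (Filter.tendsto_add_atTop_nat 1)
      have hLL : L * Lᴴ = 1 := by
        have c1 : Filter.Tendsto (fun j => f ((φ j : ℝ) * t₀) * (f ((φ j : ℝ) * t₀))ᴴ)
            Filter.atTop (nhds (L * Lᴴ)) := tendsto_mul_mat hLt (tendsto_conjT_mat hLt)
        have c2 : ∀ j, f ((φ j : ℝ) * t₀) * (f ((φ j : ℝ) * t₀))ᴴ = 1 := by
          intro j
          rw [hstar, ← hfmul]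
          simp [hf0]
        simp only [c2] at c1
        exact (tendsto_nhds_unique tendsto_const_nhds c1).symm
      have key : Filter.Tendsto
          (fun j => f t₀ * (f ((φ j : ℝ) * t₀) * (f ((φ (j + 1) : ℝ) * t₀))ᴴ))
          Filter.atTop (nhds (f t₀)) := by
        have := tendsto_mul_mat (tendsto_const_nhds (x := f t₀))
          (tendsto_mul_mat hLt (tendsto_conjT_mat hLt'))
        simpa [hLL] using this
      refine mem_closure_of_tendsto key (Filter.Eventually.of_forall fun j => ?_)
      have hgap : (φ j : ℝ) + 1 ≤ (φ (j + 1) : ℝ) := by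
        exact_mod_cast Nat.succ_le_of_lt (hφ (Nat.lt_succ_self j))
      refine ⟨t₀ + ((φ j : ℝ) * t₀ + -((φ (j + 1) : ℝ) * t₀)), ?_, ?_⟩
      · have hfac : (0 : ℝ) ≤ (φ (j + 1) : ℝ) - (φ j : ℝ) - 1 := by linarith
        have := mul_nonneg hfac (neg_nonneg.2 h.le)
        simp only [Set.mem_Ici]
        nlinarith
      · rw [hfmul, hfmul, ← hstar]
  -- covering argument
  set δ := ε / (n + 1) with hδdef
  have hδ : 0 < δ := by positivity
  have hcover : K ⊆ ⋃ t : ℝ, Metric.ball (f |t|) δ := by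
    intro N hN
    have hN' : N ∈ closure (f '' Set.Ici 0) := by
      refine closure_minimal ?_ isClosed_closure hN
      rintro _ ⟨t, rfl⟩; exact hpos t
    rcases Metric.mem_closure_iff.1 hN' δ hδ with ⟨y, ⟨t, ht0, rfl⟩, hd⟩
    exact Set.mem_iUnion.2 ⟨t, by
      simpa [Metric.mem_ball, abs_of_nonneg (Set.mem_Ici.1 ht0)] using hd⟩
  obtain ⟨S, hS⟩ := hK.elim_finite_subcover (fun t : ℝ => Metric.ball (f |t|) δ)
    (fun t => Metric.isOpen_ball) hcover
  refine ⟨1 + ∑ t ∈ S, |t|, by positivity, ?_⟩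
  intro M hM s
  have hfs : f (-s) ∈ K := subset_closure ⟨-s, rfl⟩
  have hNK : M * f (-s) ∈ K := hKmul M hM _ hfs
  rcases Set.mem_iUnion₂.1 (hS hNK) with ⟨t, htS, htb⟩
  refine ⟨|t|, abs_nonneg t, ?_, ?_⟩
  · have h1 : |t| ≤ ∑ u ∈ S, |u| := Finset.single_le_sum (fun u _ => abs_nonneg u) htS
    linarith
  · have hd : ‖M * f (-s) - f |t|‖ < δ := by
      rw [← dist_eq_norm]; exact htb
    have e : (M * f (-s) - f |t|) * f s = M - f (s + |t|) := by
      have h1 : f (-s) * f s = 1 := by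
        rw [← hfmul]; simp [hf0]
      have h2 : f |t| * f s = f (s + |t|) := by rw [← hfmul, add_comm]
      rw [sub_mul, mul_assoc, h1, mul_one, h2]
    rw [← e]
    have hb := mul_norm_bound (M * f (-s) - f |t|) (f s)
    have hfs1 : ‖f s‖ ≤ 1 := hnorm s
    have hnn : (0 : ℝ) ≤ ‖M * f (-s) - f |t|‖ := norm_nonneg _
    have s1 : ‖M * f (-s) - f |t|‖ * ‖f s‖ ≤ ‖M * f (-s) - f |t|‖ :=
      mul_le_of_le_one_right hnn hfs1
    have s2 : (n : ℝ) * (‖M * f (-s) - f |t|‖ * ‖f s‖) ≤ (n : ℝ) * ‖M * f (-s) - f |t|‖ :=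
      mul_le_mul_of_nonneg_left s1 (Nat.cast_nonneg n)
    have s3 : (n : ℝ) * ‖M * f (-s) - f |t|‖ ≤ (n : ℝ) * δ :=
      mul_le_mul_of_nonneg_left hd.le (Nat.cast_nonneg n)
    have hδε : (n : ℝ) * δ < ε := by
      have h1 : (0 : ℝ) < (n : ℝ) + 1 := by positivity
      rw [hδdef, mul_div_assoc', div_lt_iff₀ h1]
      nlinarith
    linarith
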